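/- Let G ≠ C_{2k} be obtained from an even cycle C_{2k} with 2k ≥ 6 and 2k ≡ 1 (mod 3) by attaching pendant edges at cycle vertices, such that every cycle vertex has degree at most 3. Then the strong chromatic index of G is at most max over edges uv of the cycle of (d(u) + d(v)), i.e. at most 6. -/

import Mathlib

open SimpleGraph

/-- Two edges of `G` are within distance at most 2: they share a vertex, or some edge of `G`
joins an endpoint of one to an endpoint of the other. -/
def EdgesNear {V : Type*} (G : SimpleGraph V) (e f : Sym2 V) : Prop :=
  (∃ x, x ∈ e ∧ x ∈ f) ∨ (∃ x y, x ∈ e ∧ y ∈ f ∧ G.Adj x y)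

/-- `c` assigns distinct colours to any two distinct edges of `G` at distance at most 2. -/
def IsStrongEdgeColoringOn {V : Type*} (G : SimpleGraph V) (c : Sym2 V → ℕ) : Prop :=
  ∀ e ∈ G.edgeSet, ∀ f ∈ G.edgeSet, e ≠ f → EdgesNear G e f → c e ≠ c f

/-- A strong edge-colouring of `G` with `k` colours. -/
def IsStrongEdgeColoring {V : Type*} (G : SimpleGraph V) (k : ℕ) (c : Sym2 V → ℕ) : Prop :=
  (∀ e ∈ G.edgeSet, c e < k) ∧ IsStrongEdgeColoringOn G c

/-- The strong chromatic index of `G`. -/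
noncomputable def sci {V : Type*} (G : SimpleGraph V) : ℕ :=
  sInf {k | ∃ c : Sym2 V → ℕ, IsStrongEdgeColoring G k c}

/-- Degree of a vertex (cardinality of its neighbour set). -/
noncomputable def sdeg {V : Type*} (G : SimpleGraph V) (v : V) : ℕ :=
  (G.neighborSet v).ncard

/-- The graph obtained from the cycle `C_n` (on vertices `Sum.inl i`, `i : Fin n`)
by attaching `p i` pendant edges at the cycle vertex `i` (the pendant neighbours of `i`
are the vertices `Sum.inr ⟨i, x⟩`). -/
def pufferGraph (n : ℕ) (p : Fin n → ℕ) :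
    SimpleGraph (Fin n ⊕ Σ i : Fin n, Fin (p i)) :=
  SimpleGraph.fromRel (fun a b =>
    (∃ i j : Fin n, a = Sum.inl i ∧ b = Sum.inl j ∧ (SimpleGraph.cycleGraph n).Adj i j) ∨
    (∃ (i : Fin n) (x : Fin (p i)), a = Sum.inl i ∧ b = Sum.inr ⟨i, x⟩))

open Classical in
/-- The maximum of `d(u) + d(v)` over the edges `uv` of the cycle of `pufferGraph n p`. -/
noncomputable def maxCycleDegSum (n : ℕ) (p : Fin n → ℕ) : ℕ :=
  Finset.univ.sup fun q : Fin n × Fin n =>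
    if (SimpleGraph.cycleGraph n).Adj q.1 q.2 then
      sdeg (pufferGraph n p) (Sum.inl q.1) + sdeg (pufferGraph n p) (Sum.inl q.2)
    else 0

open SimpleGraph Sum

open Fin.CommRing

section Aux

variable {n : ℕ} {p : Fin n → ℕ}

set_option linter.unusedSectionVars false

/-- colour of cycle edge `{a, a+1}` -/
def fcol (n : ℕ) (a : Fin n) : ℕ := if a.val = n - 1 then 3 else a.val % 3

variable [NeZero n]

open Classical in
/-- colour of pendant edge at vertex `i` -/
noncomputable def gcol (n : ℕ) [NeZero n] (p : Fin n → ℕ) (i : Fin n) : ℕ :=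
  4 + (if ∃ j : Fin n, 1 ≤ p j ∧ 1 ≤ p (j + 1) then i.val % 2 else 0)

noncomputable def pcol (n : ℕ) [NeZero n] (p : Fin n → ℕ) :
    (Fin n ⊕ Σ i : Fin n, Fin (p i)) → (Fin n ⊕ Σ i : Fin n, Fin (p i)) → ℕ
  | inl i, inl j =>
      if j = i + 1 then (if i = j + 1 then 0 else fcol n i)
      else if i = j + 1 then fcol n j else 0
  | inl _, inr s => gcol n p s.1
  | inr s, inl _ => gcol n p s.1
  | inr _, inr _ => 0

lemma pcol_symm (a b : Fin n ⊕ Σ i : Fin n, Fin (p i)) :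
    pcol n p a b = pcol n p b a := by
  rcases a with i | s <;> rcases b with j | t <;> simp only [pcol] <;>
    first
    | rfl
    | (split_ifs <;> rfl)

noncomputable def ccol (n : ℕ) [NeZero n] (p : Fin n → ℕ) :
    Sym2 (Fin n ⊕ Σ i : Fin n, Fin (p i)) → ℕ :=
  Sym2.lift ⟨pcol n p, pcol_symm⟩

lemma fcol_le (a : Fin n) : fcol n a ≤ 3 := by
  unfold fcol; split_ifs <;> omega

lemma gcol_ge (i : Fin n) : 4 ≤ gcol n p i := by
  unfold gcol; omega

lemma gcol_le (i : Fin n) : gcol n p i ≤ 5 := by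
  unfold gcol; split_ifs with h
  · omega
  · omega

lemma val_add_one (h : 2 ≤ n) (a : Fin n) :
    (a + 1).val = if a.val + 1 = n then 0 else a.val + 1 := by
  have h1 : (1 : Fin n).val = 1 := by
    simp [Fin.val_one', Nat.mod_eq_of_lt (by omega : 1 < n)]
  rw [Fin.val_add, h1]
  have := a.isLt
  split_ifs with hc
  · rw [hc, Nat.mod_self]
  · exact Nat.mod_eq_of_lt (by omega)

lemma fcol_ne (h3 : n % 3 = 1) (h6 : 6 ≤ n) {a b : Fin n}
    (hab : b = a + 1 ∨ b = a + 2) : fcol n a ≠ fcol n b := by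
  have ha := a.isLt
  have hb := b.isLt
  have h1 := val_add_one (by omega : 2 ≤ n) a
  have h2 := val_add_one (by omega : 2 ≤ n) (a + 1)
  have hbv : b.val = (a + 1).val ∨ b.val = (a + 1 + 1).val := by
    rcases hab with h | h
    · left; rw [h]
    · right; rw [h]; norm_num [add_assoc]
  unfold fcol
  split_ifs at * <;> omega

lemma parity_ne (hn2 : n % 2 = 0) (h2 : 2 ≤ n) (a : Fin n) :
    a.val % 2 ≠ (a + 1).val % 2 := by
  have h1 := val_add_one h2 a
  have := a.isLt
  split_ifs at h1 <;> omega

lemma gcol_ne (hn2 : n % 2 = 0) (h2 : 2 ≤ n) {i j : Fin n}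
    (hpi : 1 ≤ p i) (hpj : 1 ≤ p j) (hadj : j = i + 1 ∨ i = j + 1) :
    gcol n p i ≠ gcol n p j := by
  have hex : ∃ l : Fin n, 1 ≤ p l ∧ 1 ≤ p (l + 1) := by
    rcases hadj with h | h
    · exact ⟨i, hpi, by rw [← h]; exact hpj⟩
    · exact ⟨j, hpj, by rw [← h]; exact hpi⟩
  unfold gcol
  rw [if_pos hex, if_pos hex]
  rcases hadj with h | h
  · have := parity_ne hn2 h2 i; rw [← h] at this; omega
  · have := parity_ne hn2 h2 j; rw [← h] at this; omega

-- adjacency lemmas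
lemma puffer_adj_inl_inl {i j : Fin n} :
    (pufferGraph n p).Adj (inl i) (inl j) ↔ (cycleGraph n).Adj i j := by
  constructor
  · rintro ⟨hne, h | h⟩ <;>
      rcases h with (⟨i', j', hi, hj, hadj⟩ | ⟨i', x, hi, hj⟩) <;> simp_all
    exact hadj.symm
  · intro h
    exact ⟨by simpa using h.ne, Or.inl (Or.inl ⟨i, j, rfl, rfl, h⟩)⟩

lemma puffer_adj_inl_inr {i : Fin n} {s : Σ i : Fin n, Fin (p i)} :
    (pufferGraph n p).Adj (inl i) (inr s) ↔ s.1 = i := by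
  constructor
  · rintro ⟨hne, h | h⟩ <;>
      rcases h with (⟨i', j', hi, hj, hadj⟩ | ⟨i', x, hi, hj⟩) <;>
      first
      | simp_all
      | (rcases s with ⟨a, b⟩; simp_all)
  · rintro rfl
    exact ⟨by simp, Or.inl (Or.inr ⟨s.1, s.2, rfl, rfl⟩)⟩

lemma puffer_not_adj_inr_inr {s t : Σ i : Fin n, Fin (p i)} :
    ¬ (pufferGraph n p).Adj (inr s) (inr t) := by
  rintro ⟨hne, h | h⟩ <;>
    rcases h with (⟨i', j', hi, hj, hadj⟩ | ⟨i', x, hi, hj⟩) <;> simp_all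

lemma one_val (h2 : 2 ≤ n) : (1 : Fin n).val = 1 := by
  simp [Fin.val_one', Nat.mod_eq_of_lt (by omega : 1 < n)]

lemma cyc_adj_cases (h2 : 2 ≤ n) {i j : Fin n}
    (h : (cycleGraph n).Adj i j) : j = i + 1 ∨ i = j + 1 := by
  rw [cycleGraph_adj'] at h
  rcases h with h | h
  · right
    have h' : i - j = 1 := Fin.ext (by rw [one_val h2]; exact h)
    linear_combination h'
  · left
    have h' : j - i = 1 := Fin.ext (by rw [one_val h2]; exact h)
    linear_combination h'

lemma cyc_adj_succ (h3 : 3 ≤ n) (i : Fin n) : (cycleGraph n).Adj i (i + 1) := by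
  rw [cycleGraph_adj']
  right
  rw [add_sub_cancel_left, one_val (by omega)]

end Aux

section Aux2

open SimpleGraph Sum

variable {n : ℕ} {p : Fin n → ℕ} [NeZero n]

set_option linter.unusedSectionVars false

lemma ccol_cyc (h3 : 3 ≤ n) (a : Fin n) :
    ccol n p s(inl a, inl (a + 1)) = fcol n a := by
  have hne : ¬ (a = a + 1 + 1) := by
    intro h
    have h1 := val_add_one (by omega : 2 ≤ n) a
    have h2 := val_add_one (by omega : 2 ≤ n) (a + 1)
    have h3' := congrArg Fin.val h
    have := a.isLt
    split_ifs at h1 h2 <;> omega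
  show pcol n p (inl a) (inl (a + 1)) = fcol n a
  simp only [pcol]
  simp [hne]

lemma ccol_pend (s : Σ i : Fin n, Fin (p i)) :
    ccol n p s(inl s.1, inr s) = gcol n p s.1 := rfl

lemma edge_cases (h2 : 2 ≤ n) {e : Sym2 (Fin n ⊕ Σ i : Fin n, Fin (p i))}
    (he : e ∈ (pufferGraph n p).edgeSet) :
    (∃ a : Fin n, e = s(inl a, inl (a + 1))) ∨
    (∃ s : Σ i : Fin n, Fin (p i), e = s(inl s.1, inr s)) := by
  induction e using Sym2.ind with
  | _ x y =>
    rw [mem_edgeSet] at he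
    rcases x with i | s <;> rcases y with j | t
    · rw [puffer_adj_inl_inl] at he
      rcases cyc_adj_cases h2 he with h | h
      · exact Or.inl ⟨i, by rw [h]⟩
      · exact Or.inl ⟨j, by rw [h, Sym2.eq_swap]⟩
    · rw [puffer_adj_inl_inr] at he
      exact Or.inr ⟨t, by rw [he]⟩
    · rw [adj_comm, puffer_adj_inl_inr] at he
      exact Or.inr ⟨s, by rw [he, Sym2.eq_swap]⟩
    · exact absurd he puffer_not_adj_inr_inr

lemma cyc_adj_iff (h3 : 3 ≤ n) {i j : Fin n} :
    (cycleGraph n).Adj i j ↔ j = i - 1 ∨ j = i + 1 := by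
  constructor
  · intro h
    rcases cyc_adj_cases (by omega) h with h | h
    · exact Or.inr h
    · exact Or.inl (by linear_combination -h)
  · rintro (rfl | rfl)
    · have := (cyc_adj_succ h3 (i - 1)).symm
      rwa [sub_add_cancel] at this
    · exact cyc_adj_succ h3 i

lemma sdeg_inl (h3 : 3 ≤ n) (i : Fin n) :
    sdeg (pufferGraph n p) (inl i) = 2 + p i := by
  have hset : (pufferGraph n p).neighborSet (inl i) =
      {inl (i - 1), inl (i + 1)} ∪ (fun x : Fin (p i) =>
        (inr ⟨i, x⟩ : Fin n ⊕ Σ i : Fin n, Fin (p i))) '' Set.univ := by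
    ext x
    simp only [mem_neighborSet, Set.mem_union, Set.mem_insert_iff, Set.mem_singleton_iff,
      Set.image_univ, Set.mem_range]
    rcases x with j | s
    · rw [puffer_adj_inl_inl, cyc_adj_iff h3]
      simp
    · rw [puffer_adj_inl_inr]
      obtain ⟨a, b⟩ := s
      constructor
      · intro h
        simp only at h
        subst h
        exact Or.inr ⟨b, rfl⟩
      · rintro ((h | h) | ⟨y, hy⟩)
        · exact absurd h (by simp)
        · exact absurd h (by simp)
        · obtain ⟨rfl, _⟩ := Sigma.mk.inj_iff.mp (inr_injective hy)
          rfl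
  have hne2 : (inl (i - 1) : Fin n ⊕ Σ i : Fin n, Fin (p i)) ≠ inl (i + 1) := by
    simp only [ne_eq, inl.injEq]
    intro h
    have h2 : (2 : Fin n) = 0 := by linear_combination -h
    have h2v := congrArg Fin.val h2
    have hv : ((2 : Fin n)).val = 2 % n := rfl
    have hv0 : ((0 : Fin n)).val = 0 := rfl
    rw [hv, hv0, Nat.mod_eq_of_lt (by omega)] at h2v
    omega
  have hinj : Function.Injective (fun x : Fin (p i) =>
      (inr ⟨i, x⟩ : Fin n ⊕ Σ i : Fin n, Fin (p i))) := by
    intro x y hxy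
    simpa using hxy
  rw [sdeg, hset, Set.ncard_union_eq]
  · rw [Set.ncard_pair hne2, Set.ncard_image_of_injective _ hinj]
    simp [Set.ncard_univ]
  · simp [Set.disjoint_left]

lemma M_ge (h3 : 3 ≤ n) (i : Fin n) :
    4 + p i + p (i + 1) ≤ maxCycleDegSum n p := by
  unfold maxCycleDegSum
  refine le_trans ?_ (Finset.le_sup (Finset.mem_univ (i, i + 1)))
  dsimp only
  rw [if_pos (cyc_adj_succ h3 i)]
  rw [sdeg_inl h3, sdeg_inl h3]
  omega

end Aux2

open Sum

/-- Let `G ≠ C_{2k}` be obtained from an even cycle `C_{2k}`, `2k ≥ 6`, `2k ≡ 1 (mod 3)`, by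
attaching pendant edges at cycle vertices, with every cycle vertex of degree at most 3. Then the
strong chromatic index is at most `max_{uv ∈ E(C_{2k})} (d(u) + d(v))`. -/
theorem sci_even_cycle_mod1 (k : ℕ) (hk : 3 ≤ k) (hmod : (2 * k) % 3 = 1)
    (p : Fin (2 * k) → ℕ) (hp : ∃ i, 1 ≤ p i)
    (hdeg : ∀ i : Fin (2 * k), sdeg (pufferGraph (2 * k) p) (Sum.inl i) ≤ 3) :
    sci (pufferGraph (2 * k) p) ≤ maxCycleDegSum (2 * k) p := by
  have hn6 : 6 ≤ 2 * k := by omega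
  have hn3 : (2 * k) % 3 = 1 := hmod
  have hn2 : (2 * k) % 2 = 0 := by omega
  haveI : NeZero (2 * k) := ⟨by omega⟩
  have hp1 : ∀ i, p i ≤ 1 := fun i => by
    have h := hdeg i
    rw [sdeg_inl (by omega)] at h
    omega
  obtain ⟨i₀, hi₀⟩ := hp
  have hM5 : 5 ≤ maxCycleDegSum (2 * k) p := by
    have := M_ge (p := p) (by omega) i₀; omega
  have hM6 : (∃ l : Fin (2 * k), 1 ≤ p l ∧ 1 ≤ p (l + 1)) → 6 ≤ maxCycleDegSum (2 * k) p := by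
    rintro ⟨l, h1, h2⟩
    have := M_ge (p := p) (by omega) l; omega
  apply Nat.sInf_le
  refine ⟨ccol (2 * k) p, ?_, ?_⟩
  · -- all colours below the bound
    intro e he
    rcases edge_cases (by omega) he with ⟨a, rfl⟩ | ⟨s, rfl⟩
    · rw [ccol_cyc (by omega)]
      have := fcol_le (n := 2 * k) a
      omega
    · rw [ccol_pend]
      by_cases hex : ∃ l : Fin (2 * k), 1 ≤ p l ∧ 1 ≤ p (l + 1)
      · have h6 := hM6 hex
        have := gcol_le (p := p) s.1
        omega
      · have h4 : gcol (2 * k) p s.1 = 4 := by unfold gcol; rw [if_neg hex]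
        omega
  · -- strong colouring property
    intro e he f hf hne hnear
    rcases edge_cases (by omega) he with ⟨a, rfl⟩ | ⟨s, rfl⟩ <;>
      rcases edge_cases (by omega) hf with ⟨b, rfl⟩ | ⟨t, rfl⟩
    · -- cycle edge vs cycle edge
      rw [ccol_cyc (by omega), ccol_cyc (by omega)]
      have hab : a ≠ b := fun h => hne (by rw [h])
      have key : b = a + 1 ∨ b = a + 2 ∨ a = b + 1 ∨ a = b + 2 := by
        rcases hnear with ⟨x, hx1, hx2⟩ | ⟨x, y, hx1, hy1, hadj⟩
        · simp only [Sym2.mem_iff] at hx1 hx2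
          rcases hx1 with rfl | rfl <;> rcases hx2 with h | h <;>
            simp only [inl.injEq] at h <;>
            first
            | exact absurd (by linear_combination h) hab
            | exact absurd (by linear_combination -h) hab
            | (left; linear_combination h)
            | (left; linear_combination -h)
            | (right; left; linear_combination h)
            | (right; left; linear_combination -h)
            | (right; right; left; linear_combination h)
            | (right; right; left; linear_combination -h)
            | (right; right; right; linear_combination h)
            | (right; right; right; linear_combination -h)
        · simp only [Sym2.mem_iff] at hx1 hy1
          rcases hx1 with rfl | rfl <;> rcases hy1 with rfl | rfl <;>
            rw [puffer_adj_inl_inl] at hadj <;>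
            rcases cyc_adj_cases (by omega : 2 ≤ (2 * k)) hadj with h | h <;>
            first
            | exact absurd (by linear_combination h) hab
            | exact absurd (by linear_combination -h) hab
            | (left; linear_combination h)
            | (left; linear_combination -h)
            | (right; left; linear_combination h)
            | (right; left; linear_combination -h)
            | (right; right; left; linear_combination h)
            | (right; right; left; linear_combination -h)
            | (right; right; right; linear_combination h)
            | (right; right; right; linear_combination -h)
      rcases key with h | h | h | h
      · exact fcol_ne hn3 hn6 (Or.inl h)
      · exact fcol_ne hn3 hn6 (Or.inr h)
      · exact (fcol_ne hn3 hn6 (Or.inl h)).symm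
      · exact (fcol_ne hn3 hn6 (Or.inr h)).symm
    · -- cycle edge vs pendant edge
      rw [ccol_cyc (by omega), ccol_pend]
      have h1 := fcol_le (n := 2 * k) a
      have h2 := gcol_ge (p := p) t.1
      omega
    · -- pendant edge vs cycle edge
      rw [ccol_cyc (by omega), ccol_pend]
      have h1 := fcol_le (n := 2 * k) b
      have h2 := gcol_ge (p := p) s.1
      omega
    · -- pendant edge vs pendant edge
      rw [ccol_pend, ccol_pend]
      have hst : s ≠ t := fun h => hne (by rw [h])
      have key : s.1 = t.1 ∨ (cycleGraph (2 * k)).Adj s.1 t.1 := by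
        rcases hnear with ⟨x, hx1, hx2⟩ | ⟨x, y, hx1, hy1, hadj⟩
        · simp only [Sym2.mem_iff] at hx1 hx2
          rcases hx1 with rfl | rfl <;> rcases hx2 with h | h
          · simp only [inl.injEq] at h; exact Or.inl h
          · exact absurd h (by simp)
          · exact absurd h (by simp)
          · simp only [inr.injEq] at h; exact absurd h hst
        · simp only [Sym2.mem_iff] at hx1 hy1
          rcases hx1 with rfl | rfl <;> rcases hy1 with rfl | rfl
          · rw [puffer_adj_inl_inl] at hadj; exact Or.inr hadj
          · rw [puffer_adj_inl_inr] at hadj; exact Or.inl hadj.symm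
          · rw [adj_comm, puffer_adj_inl_inr] at hadj; exact Or.inl hadj
          · exact absurd hadj puffer_not_adj_inr_inr
      rcases key with h | h
      · exfalso
        obtain ⟨a, x⟩ := s
        obtain ⟨b, y⟩ := t
        simp only at h
        subst h
        have hxy : x ≠ y := fun hh => hst (by rw [hh])
        have h1 := hp1 a
        have hx := x.isLt
        have hy := y.isLt
        exact hxy (Fin.ext (by omega))
      · exact gcol_ne hn2 (by omega) (s.2.pos) (t.2.pos)
          (cyc_adj_cases (by omega) h)
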